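/- If r_1,...,r_m are drawn i.i.d. from any distribution over F_2^n, then the probability that an independently drawn vector r from the same distribution is not in the linear span of r_1,...,r_m is at most n/m. -/

import Mathlib

open MeasureTheory
open scoped Classical

noncomputable instance : MeasurableSpace (ZMod 2) := ⊤

instance : MeasurableSingletonClass (ZMod 2) := ⟨fun _ => trivial⟩

/-- Counting lemma: the number of indices `k` such that `f k` is not in the span of the
previous vectors is at most `n`, the dimension of the ambient space. -/
lemma span_miss_count_le (n m : ℕ) (f : Fin (m + 1) → Fin n → ZMod 2) :
    (Finset.univ.filter fun k : Fin (m + 1) =>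
      f k ∉ Submodule.span (ZMod 2) (f '' {j | j < k})).card ≤ n := by
  have key : ∀ t, t ≤ m + 1 →
      (Finset.univ.filter fun k : Fin (m + 1) =>
        (f k ∉ Submodule.span (ZMod 2) (f '' {j | j < k})) ∧ (k : ℕ) < t).card ≤
      Module.finrank (ZMod 2)
        (Submodule.span (ZMod 2) (f '' {j : Fin (m + 1) | (j : ℕ) < t})) := by
    intro t
    induction t with
    | zero => intro _; simp
    | succ t ih =>
      intro ht
      have ht' : t < m + 1 := ht
      have ih' := ih ht'.le
      set kt : Fin (m + 1) := ⟨t, ht'⟩ with hkt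
      have hlt : {j : Fin (m + 1) | j < kt} = {j : Fin (m + 1) | (j : ℕ) < t} := by
        ext j; simp [Fin.lt_def, hkt]
      have hmono : Submodule.span (ZMod 2) (f '' {j : Fin (m + 1) | (j : ℕ) < t}) ≤
          Submodule.span (ZMod 2) (f '' {j : Fin (m + 1) | (j : ℕ) < t + 1}) :=
        Submodule.span_mono (Set.image_mono fun j hj => Nat.lt_succ_of_lt hj)
      by_cases hk : f kt ∈ Submodule.span (ZMod 2) (f '' {j | j < kt})
      · -- the filter set does not change
        have hfil : (Finset.univ.filter fun k : Fin (m + 1) =>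
            (f k ∉ Submodule.span (ZMod 2) (f '' {j | j < k})) ∧ (k : ℕ) < t + 1) =
            (Finset.univ.filter fun k : Fin (m + 1) =>
            (f k ∉ Submodule.span (ZMod 2) (f '' {j | j < k})) ∧ (k : ℕ) < t) := by
          apply Finset.filter_congr
          intro k _
          constructor
          · rintro ⟨h1, h2⟩
            refine ⟨h1, ?_⟩
            rcases Nat.lt_succ_iff_lt_or_eq.mp h2 with h | h
            · exact h
            · exfalso; apply h1
              have : k = kt := Fin.ext h
              rw [this]; exact hk
          · rintro ⟨h1, h2⟩; exact ⟨h1, Nat.lt_succ_of_lt h2⟩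
        rw [hfil]
        exact ih'.trans (Submodule.finrank_mono hmono)
      · -- strict growth of the span
        have hsub : (Finset.univ.filter fun k : Fin (m + 1) =>
            (f k ∉ Submodule.span (ZMod 2) (f '' {j | j < k})) ∧ (k : ℕ) < t + 1) ⊆
            insert kt (Finset.univ.filter fun k : Fin (m + 1) =>
            (f k ∉ Submodule.span (ZMod 2) (f '' {j | j < k})) ∧ (k : ℕ) < t) := by
          intro k hkk
          simp only [Finset.mem_filter, Finset.mem_univ, true_and] at hkk
          rcases Nat.lt_succ_iff_lt_or_eq.mp hkk.2 with h | h
          · exact Finset.mem_insert_of_mem (by simp [hkk.1, h])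
          · exact Finset.mem_insert.mpr (Or.inl (Fin.ext h))
        have hstrict : Submodule.span (ZMod 2) (f '' {j : Fin (m + 1) | (j : ℕ) < t}) <
            Submodule.span (ZMod 2) (f '' {j : Fin (m + 1) | (j : ℕ) < t + 1}) := by
          refine lt_of_le_of_ne hmono ?_
          intro heq
          apply hk
          rw [hlt, heq]
          exact Submodule.subset_span ⟨kt, by simp [hkt], rfl⟩
        have hrank := Submodule.finrank_lt_finrank_of_lt hstrict
        calc (Finset.univ.filter fun k : Fin (m + 1) =>
            (f k ∉ Submodule.span (ZMod 2) (f '' {j | j < k})) ∧ (k : ℕ) < t + 1).card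
            ≤ (insert kt (Finset.univ.filter fun k : Fin (m + 1) =>
              (f k ∉ Submodule.span (ZMod 2) (f '' {j | j < k})) ∧ (k : ℕ) < t)).card :=
              Finset.card_le_card hsub
          _ ≤ (Finset.univ.filter fun k : Fin (m + 1) =>
              (f k ∉ Submodule.span (ZMod 2) (f '' {j | j < k})) ∧ (k : ℕ) < t).card + 1 :=
              Finset.card_insert_le _ _
          _ ≤ Module.finrank (ZMod 2)
              (Submodule.span (ZMod 2) (f '' {j : Fin (m + 1) | (j : ℕ) < t})) + 1 := by
              omega
          _ ≤ _ := hrank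
  have h := key (m + 1) le_rfl
  have heq : (Finset.univ.filter fun k : Fin (m + 1) =>
      (f k ∉ Submodule.span (ZMod 2) (f '' {j | j < k})) ∧ (k : ℕ) < m + 1) =
      (Finset.univ.filter fun k : Fin (m + 1) =>
      f k ∉ Submodule.span (ZMod 2) (f '' {j | j < k})) := by
    apply Finset.filter_congr; intro k _; simp [k.isLt]
  rw [heq] at h
  refine h.trans ?_
  calc Module.finrank (ZMod 2)
        (Submodule.span (ZMod 2) (f '' {j : Fin (m + 1) | (j : ℕ) < m + 1}))
      ≤ Module.finrank (ZMod 2) (Fin n → ZMod 2) := Submodule.finrank_le _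
    _ = n := Module.finrank_fin_fun (ZMod 2)

/-- If `r_1, …, r_m` are drawn i.i.d. from any distribution over `F_2^n`, the
probability that an independently drawn vector from the same distribution does
not lie in their linear span is at most `n / m`. -/
theorem span_miss_prob_le (n m : ℕ) (hm : 0 < m)
    (D : Measure (Fin n → ZMod 2)) [IsProbabilityMeasure D] :
    (Measure.pi fun _ : Fin (m + 1) => D)
      {f | f (Fin.last m) ∉
        Submodule.span (ZMod 2) (Set.range fun i : Fin m => f i.castSucc)} ≤
    (n : ENNReal) / (m : ENNReal) := by
  set P := Measure.pi fun _ : Fin (m + 1) => D with hP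
  set A : Set (Fin (m + 1) → Fin n → ZMod 2) :=
    {f | f (Fin.last m) ∉
      Submodule.span (ZMod 2) (Set.range fun i : Fin m => f i.castSucc)} with hA
  set B : Fin (m + 1) → Set (Fin (m + 1) → Fin n → ZMod 2) :=
    fun k => {f | f k ∉ Submodule.span (ZMod 2) (f '' {j | j < k})} with hB
  -- the range over `castSucc` is the set of vectors with index `< last m`
  have hrange : ∀ f : Fin (m + 1) → Fin n → ZMod 2,
      (Set.range fun i : Fin m => f i.castSucc) = f '' {j | j < Fin.last m} := by
    intro f
    rw [show (fun i : Fin m => f i.castSucc) = f ∘ Fin.castSucc from rfl,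
      Set.range_comp, Fin.range_castSucc]
    congr 1
  -- every set is measurable
  have hmeas : ∀ s : Set (Fin (m + 1) → Fin n → ZMod 2), MeasurableSet s :=
    fun s => MeasurableSet.of_discrete
  -- step 1: P A ≤ P (B k) for every k, by exchangeability
  have hPA : ∀ k : Fin (m + 1), P A ≤ P (B k) := by
    intro k
    set σ : Equiv.Perm (Fin (m + 1)) := Equiv.swap k (Fin.last m) with hσ
    have hMP := measurePreserving_piCongrLeft (fun _ : Fin (m + 1) => D) σ
    set T := MeasurableEquiv.piCongrLeft (fun _ : Fin (m + 1) => Fin n → ZMod 2) σ with hT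
    have hTapp : ∀ (f : Fin (m + 1) → Fin n → ZMod 2) (j : Fin (m + 1)),
        T f j = f (σ j) := by
      intro f j
      have h1 : σ (σ j) = j := Equiv.swap_apply_self _ _ _
      calc T f j = T f (σ (σ j)) := by rw [h1]
        _ = f (σ j) := by
            rw [hT, MeasurableEquiv.coe_piCongrLeft]
            exact Equiv.piCongrLeft_apply_apply (fun _ : Fin (m + 1) => Fin n → ZMod 2) σ f (σ j)
    have hsub : A ⊆ T ⁻¹' (B k) := by
      intro f hf
      simp only [Set.mem_preimage, hB, Set.mem_setOf_eq]
      have hfk : T f k = f (Fin.last m) := by rw [hTapp, hσ, Equiv.swap_apply_left]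
      have himg : (T f) '' {j | j < k} = f '' {j | j < k} := by
        apply Set.image_congr
        intro j hj
        have hj' : j < k := hj
        rw [hTapp, hσ, Equiv.swap_apply_of_ne_of_ne hj'.ne
          (lt_of_lt_of_le hj' k.le_last).ne]
      rw [hfk, himg]
      intro hmem
      have hf' : f (Fin.last m) ∉
          Submodule.span (ZMod 2) (Set.range fun i : Fin m => f i.castSucc) := hf
      apply hf'
      rw [hrange f]
      exact Submodule.span_mono
        (Set.image_mono fun j hj => lt_of_lt_of_le hj k.le_last) hmem
    calc P A ≤ P (T ⁻¹' (B k)) := measure_mono hsub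
      _ = P (B k) := hMP.measure_preimage (hmeas _).nullMeasurableSet
  -- step 2: sum of the probabilities is at most n
  have hsum : ∑ k : Fin (m + 1), P (B k) ≤ (n : ENNReal) := by
    have hlin : ∑ k : Fin (m + 1), P (B k) =
        ∫⁻ f, ∑ k : Fin (m + 1), (B k).indicator (fun _ => (1 : ENNReal)) f ∂P := by
      rw [lintegral_finset_sum _ fun k _ => Measurable.of_discrete]
      exact Finset.sum_congr rfl fun k _ => (lintegral_indicator_one (hmeas _)).symm
    rw [hlin]
    have hbound : ∀ f : Fin (m + 1) → Fin n → ZMod 2,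
        ∑ k : Fin (m + 1), (B k).indicator (fun _ => (1 : ENNReal)) f ≤ (n : ENNReal) := by
      intro f
      classical
      have : ∑ k : Fin (m + 1), (B k).indicator (fun _ => (1 : ENNReal)) f =
          ((Finset.univ.filter fun k : Fin (m + 1) =>
            f k ∉ Submodule.span (ZMod 2) (f '' {j | j < k})).card : ENNReal) := by
        rw [Finset.card_filter]
        push_cast
        apply Finset.sum_congr rfl
        intro k _
        by_cases hk : f ∈ B k
        · rw [Set.indicator_of_mem hk]
          simp only [hB, Set.mem_setOf_eq] at hk
          simp [hk]
        · rw [Set.indicator_of_notMem hk]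
          simp only [hB, Set.mem_setOf_eq, not_not] at hk
          simp [hk]
      rw [this]
      exact_mod_cast Nat.cast_le.mpr (span_miss_count_le n m f)
    calc ∫⁻ f, ∑ k : Fin (m + 1), (B k).indicator (fun _ => (1 : ENNReal)) f ∂P
        ≤ ∫⁻ _, (n : ENNReal) ∂P := lintegral_mono hbound
      _ = (n : ENNReal) := by simp [measure_univ]
  -- step 3: combine
  have hmul : ((m : ENNReal) + 1) * P A ≤ (n : ENNReal) := by
    have h1 : ∑ _k : Fin (m + 1), P A ≤ ∑ k : Fin (m + 1), P (B k) :=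
      Finset.sum_le_sum fun k _ => hPA k
    have h2 : ∑ _k : Fin (m + 1), P A = ((m : ENNReal) + 1) * P A := by
      rw [Finset.sum_const, Finset.card_univ, Fintype.card_fin, nsmul_eq_mul]
      push_cast
      ring
    rw [h2] at h1
    exact h1.trans hsum
  rw [ENNReal.le_div_iff_mul_le (Or.inl (by exact_mod_cast hm.ne'))
    (Or.inl (ENNReal.natCast_ne_top m))]
  calc P A * (m : ENNReal) ≤ P A * ((m : ENNReal) + 1) :=
        mul_le_mul_right (le_add_of_nonneg_right zero_le_one) _
    _ = ((m : ENNReal) + 1) * P A := mul_comm _ _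
    _ ≤ (n : ENNReal) := hmul
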